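/- The space ℝ² with the sup norm (ℓ^∞ norm) satisfies Curv ≤ 0: for every triangle (x₁,x₂,x₃), the circumradius with respect to the sup norm is at most the Euclidean circumradius of the comparison triangle. In particular, the ℓ^∞ circumradius equals half the longest side, while the Euclidean circumradius of any triangle is at least half its longest side. -/
import Mathlib

/-- Key 1-dimensional estimate: the midpoint of the range of `a, b, c` is within `D/2`
of `w` whenever `w` lies between the min and the max and all three values are within
`D` of `w`. -/
lemma midbound_aux (a b c w D : ℝ) (ha : |a - w| ≤ D) (hb : |b - w| ≤ D) (hc : |c - w| ≤ D)
    (hm : min (min a b) c ≤ w) (hM : w ≤ max (max a b) c) :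
    |(min (min a b) c + max (max a b) c) / 2 - w| ≤ D / 2 := by
  rw [abs_le] at ha hb hc ⊢
  have m2 : w - D ≤ min (min a b) c := le_min (le_min (by linarith) (by linarith)) (by linarith)
  have M2 : max (max a b) c ≤ w + D := max_le (max_le (by linarith) (by linarith)) (by linarith)
  constructor <;> linarith

/-- `ℝ²` with the sup norm satisfies `Curv ≤ 0`: its circumradii equal half the longest
side, Euclidean circumradii are at least half the longest side, and hence the sup-norm
circumradius of a triangle is at most the Euclidean circumradius of its comparison
triangle. -/
theorem sup_norm_plane_curv_nonpos (x₁ x₂ x₃ : Fin 2 → ℝ)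
    (b₁ b₂ b₃ : EuclideanSpace ℝ (Fin 2))
    (h₁₂ : ‖b₁ - b₂‖ = dist x₁ x₂) (h₁₃ : ‖b₁ - b₃‖ = dist x₁ x₃)
    (h₂₃ : ‖b₂ - b₃‖ = dist x₂ x₃) :
    (⨅ c : Fin 2 → ℝ, max (max (dist c x₁) (dist c x₂)) (dist c x₃)) =
      (1 / 2) * max (max (dist x₁ x₂) (dist x₁ x₃)) (dist x₂ x₃) ∧
    (1 / 2) * max (max ‖b₁ - b₂‖ ‖b₁ - b₃‖) ‖b₂ - b₃‖ ≤
      (⨅ z : EuclideanSpace ℝ (Fin 2), max (max ‖z - b₁‖ ‖z - b₂‖) ‖z - b₃‖) ∧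
    (⨅ c : Fin 2 → ℝ, max (max (dist c x₁) (dist c x₂)) (dist c x₃)) ≤
      (⨅ z : EuclideanSpace ℝ (Fin 2), max (max ‖z - b₁‖ ‖z - b₂‖) ‖z - b₃‖) := by
  set D := max (max (dist x₁ x₂) (dist x₁ x₃)) (dist x₂ x₃) with hDdef
  have hD12 : dist x₁ x₂ ≤ D := le_max_of_le_left (le_max_left _ _)
  have hD13 : dist x₁ x₃ ≤ D := le_max_of_le_left (le_max_right _ _)
  have hD23 : dist x₂ x₃ ≤ D := le_max_right _ _
  have hD0 : 0 ≤ D := dist_nonneg.trans hD12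
  -- coordinatewise bounds
  have p12 : ∀ k, |x₁ k - x₂ k| ≤ D := fun k => by
    have := (dist_le_pi_dist x₁ x₂ k).trans hD12
    rwa [Real.dist_eq] at this
  have p13 : ∀ k, |x₁ k - x₃ k| ≤ D := fun k => by
    have := (dist_le_pi_dist x₁ x₃ k).trans hD13
    rwa [Real.dist_eq] at this
  have p23 : ∀ k, |x₂ k - x₃ k| ≤ D := fun k => by
    have := (dist_le_pi_dist x₂ x₃ k).trans hD23
    rwa [Real.dist_eq] at this
  -- the circumcenter for the sup norm
  set c₀ : Fin 2 → ℝ :=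
    fun k => (min (min (x₁ k) (x₂ k)) (x₃ k) + max (max (x₁ k) (x₂ k)) (x₃ k)) / 2 with hc₀
  have key₁ : dist c₀ x₁ ≤ D / 2 := by
    rw [dist_pi_le_iff (by positivity)]
    intro k
    rw [Real.dist_eq]
    refine midbound_aux _ _ _ _ _ (by simpa using hD0) ?_ ?_ ?_ ?_
    · rw [abs_sub_comm]; exact p12 k
    · rw [abs_sub_comm]; exact p13 k
    · exact (min_le_left _ _).trans (min_le_left _ _)
    · exact (le_max_left _ _).trans (le_max_left _ _)
  have key₂ : dist c₀ x₂ ≤ D / 2 := by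
    rw [dist_pi_le_iff (by positivity)]
    intro k
    rw [Real.dist_eq]
    refine midbound_aux _ _ _ _ _ (p12 k) (by simpa using hD0) ?_ ?_ ?_
    · rw [abs_sub_comm]; exact p23 k
    · exact (min_le_left _ _).trans (min_le_right _ _)
    · exact (le_max_right _ _).trans (le_max_left _ _)
  have key₃ : dist c₀ x₃ ≤ D / 2 := by
    rw [dist_pi_le_iff (by positivity)]
    intro k
    rw [Real.dist_eq]
    refine midbound_aux _ _ _ _ _ (p13 k) (p23 k) (by simpa using hD0) ?_ ?_
    · exact min_le_right _ _
    · exact le_max_right _ _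
  have hbdd : BddBelow (Set.range fun c : Fin 2 → ℝ =>
      max (max (dist c x₁) (dist c x₂)) (dist c x₃)) := by
    refine ⟨0, ?_⟩
    rintro _ ⟨c, rfl⟩
    exact le_max_of_le_right dist_nonneg
  have up : (⨅ c : Fin 2 → ℝ, max (max (dist c x₁) (dist c x₂)) (dist c x₃)) ≤ (1 / 2) * D := by
    refine (ciInf_le hbdd c₀).trans ?_
    have := max_le (max_le key₁ key₂) key₃
    linarith
  have lo : (1 / 2) * D ≤
      (⨅ c : Fin 2 → ℝ, max (max (dist c x₁) (dist c x₂)) (dist c x₃)) := by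
    refine le_ciInf fun c => ?_
    set M := max (max (dist c x₁) (dist c x₂)) (dist c x₃) with hM
    have hM1 : dist c x₁ ≤ M := le_max_of_le_left (le_max_left _ _)
    have hM2 : dist c x₂ ≤ M := le_max_of_le_left (le_max_right _ _)
    have hM3 : dist c x₃ ≤ M := le_max_right _ _
    have t12 : dist x₁ x₂ ≤ 2 * M := by
      have := dist_triangle x₁ c x₂
      rw [dist_comm x₁ c] at this
      linarith
    have t13 : dist x₁ x₃ ≤ 2 * M := by
      have := dist_triangle x₁ c x₃
      rw [dist_comm x₁ c] at this
      linarith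
    have t23 : dist x₂ x₃ ≤ 2 * M := by
      have := dist_triangle x₂ c x₃
      rw [dist_comm x₂ c] at this
      linarith
    have : D ≤ 2 * M := max_le (max_le t12 t13) t23
    linarith
  have part1 : (⨅ c : Fin 2 → ℝ, max (max (dist c x₁) (dist c x₂)) (dist c x₃)) =
      (1 / 2) * D := le_antisymm up lo
  have part2 : (1 / 2) * max (max ‖b₁ - b₂‖ ‖b₁ - b₃‖) ‖b₂ - b₃‖ ≤
      (⨅ z : EuclideanSpace ℝ (Fin 2), max (max ‖z - b₁‖ ‖z - b₂‖) ‖z - b₃‖) := by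
    refine le_ciInf fun z => ?_
    set M := max (max ‖z - b₁‖ ‖z - b₂‖) ‖z - b₃‖ with hM
    have hM1 : ‖z - b₁‖ ≤ M := le_max_of_le_left (le_max_left _ _)
    have hM2 : ‖z - b₂‖ ≤ M := le_max_of_le_left (le_max_right _ _)
    have hM3 : ‖z - b₃‖ ≤ M := le_max_right _ _
    have e12 : ‖b₁ - b₂‖ ≤ 2 * M := by
      calc ‖b₁ - b₂‖ = ‖(b₁ - z) + (z - b₂)‖ := by rw [sub_add_sub_cancel]
        _ ≤ ‖b₁ - z‖ + ‖z - b₂‖ := norm_add_le _ _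
        _ = ‖z - b₁‖ + ‖z - b₂‖ := by rw [norm_sub_rev]
        _ ≤ 2 * M := by linarith
    have e13 : ‖b₁ - b₃‖ ≤ 2 * M := by
      calc ‖b₁ - b₃‖ = ‖(b₁ - z) + (z - b₃)‖ := by rw [sub_add_sub_cancel]
        _ ≤ ‖b₁ - z‖ + ‖z - b₃‖ := norm_add_le _ _
        _ = ‖z - b₁‖ + ‖z - b₃‖ := by rw [norm_sub_rev]
        _ ≤ 2 * M := by linarith
    have e23 : ‖b₂ - b₃‖ ≤ 2 * M := by
      calc ‖b₂ - b₃‖ = ‖(b₂ - z) + (z - b₃)‖ := by rw [sub_add_sub_cancel]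
        _ ≤ ‖b₂ - z‖ + ‖z - b₃‖ := norm_add_le _ _
        _ = ‖z - b₂‖ + ‖z - b₃‖ := by rw [norm_sub_rev]
        _ ≤ 2 * M := by linarith
    have : max (max ‖b₁ - b₂‖ ‖b₁ - b₃‖) ‖b₂ - b₃‖ ≤ 2 * M :=
      max_le (max_le e12 e13) e23
    linarith
  refine ⟨part1, part2, ?_⟩
  rw [part1]
  calc (1 / 2) * D = (1 / 2) * max (max ‖b₁ - b₂‖ ‖b₁ - b₃‖) ‖b₂ - b₃‖ := by
        rw [h₁₂, h₁₃, h₂₃]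
    _ ≤ _ := part2
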